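/- Let n ≥ 1, a ∈ ℝ, σ > 0, and let z₁,…,zₙ be i.i.d. Gaussian random variables with mean 0 and variance σ². Define U = exp(−na²/(2σ²)) · (1/2ⁿ) · Σ_{b ∈ {−1,1}ⁿ} exp((a/σ²)·Σ_{i=1}^{n} zᵢbᵢ). Then E[U] = 1 and E[U²] = (cosh(a²/σ²))ⁿ. -/

import Mathlib

open MeasureTheory ProbabilityTheory Finset
open Real

lemma pdf_mul_exp_eq {v : ℝ} (hv : 0 < v) (t x : ℝ) :
    gaussianPDFReal 0 ⟨v, hv.le⟩ x * Real.exp (t * x)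
      = ((Real.sqrt (2 * π * v))⁻¹ * Real.exp (v * t ^ 2 / 2)) *
        Real.exp (-(2 * v)⁻¹ * (x - v * t) ^ 2) := by
  simp only [gaussianPDFReal, sub_zero]
  change (Real.sqrt (2 * π * v))⁻¹ * Real.exp (-x ^ 2 / (2 * v)) * Real.exp (t * x) = _
  rw [mul_assoc, ← Real.exp_add, mul_assoc, mul_assoc, ← Real.exp_add]
  congr 2
  field_simp
  ring

lemma pdf_mul_exp_integrable {v : ℝ} (hv : 0 < v) (t : ℝ) :
    Integrable (fun x => gaussianPDFReal 0 ⟨v, hv.le⟩ x * Real.exp (t * x)) := by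
  simp only [pdf_mul_exp_eq hv t]
  exact ((integrable_exp_neg_mul_sq (by positivity : (0:ℝ) < (2 * v)⁻¹)).comp_sub_right
    (v * t)).const_mul _

lemma pdf_mul_exp_integral {v : ℝ} (hv : 0 < v) (t : ℝ) :
    ∫ x, gaussianPDFReal 0 ⟨v, hv.le⟩ x * Real.exp (t * x) = Real.exp (v * t ^ 2 / 2) := by
  simp only [pdf_mul_exp_eq hv t]
  rw [integral_const_mul,
    integral_sub_right_eq_self (fun x => Real.exp (-(2 * v)⁻¹ * x ^ 2)) (v * t),
    integral_gaussian]
  have : π / (2 * v)⁻¹ = 2 * π * v := by field_simp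
  rw [this, mul_right_comm, inv_mul_cancel₀ (by positivity), one_mul]
open MeasureTheory ProbabilityTheory Finset Real

lemma gauss_smul_eq {v : ℝ} (hv : 0 < v) (t : ℝ) :
    (fun x => (gaussianPDFReal 0 ⟨v, hv.le⟩ x).toNNReal • Real.exp (t * x))
      = fun x => gaussianPDFReal 0 ⟨v, hv.le⟩ x * Real.exp (t * x) := by
  funext x
  rw [NNReal.smul_def]
  exact congrArg (· * _) (Real.coe_toNNReal _ (gaussianPDFReal_nonneg _ _ _))

lemma gauss_var_ne {v : ℝ} (hv : 0 < v) : (⟨v, hv.le⟩ : NNReal) ≠ 0 := by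
  intro h
  exact hv.ne' (congrArg NNReal.toReal h)

lemma gauss_withDensity {v : ℝ} (hv : 0 < v) :
    gaussianReal 0 ⟨v, hv.le⟩ = volume.withDensity
      (fun x => ((gaussianPDFReal 0 ⟨v, hv.le⟩ x).toNNReal : ENNReal)) := by
  rw [gaussianReal_of_var_ne_zero 0 (gauss_var_ne hv)]
  rfl

lemma gauss_exp_integrable {v : ℝ} (hv : 0 < v) (t : ℝ) :
    Integrable (fun x => Real.exp (t * x)) (gaussianReal 0 ⟨v, hv.le⟩) := by
  rw [gauss_withDensity hv,
    integrable_withDensity_iff_integrable_smul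
      ((measurable_gaussianPDFReal 0 ⟨v, hv.le⟩).real_toNNReal),
    gauss_smul_eq hv t]
  exact pdf_mul_exp_integrable hv t

lemma gauss_exp_integral {v : ℝ} (hv : 0 < v) (t : ℝ) :
    ∫ x, Real.exp (t * x) ∂(gaussianReal 0 ⟨v, hv.le⟩) = Real.exp (v * t ^ 2 / 2) := by
  rw [gauss_withDensity hv,
    integral_withDensity_eq_integral_smul
      ((measurable_gaussianPDFReal 0 ⟨v, hv.le⟩).real_toNNReal)]
  rw [gauss_smul_eq hv t]
  exact pdf_mul_exp_integral hv t

lemma z_exp_integrable {Ω : Type} [MeasurableSpace Ω] (μ : Measure Ω) {v : ℝ} (hv : 0 < v)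
    {z : Ω → ℝ} (hzm : Measurable z) (hz : μ.map z = gaussianReal 0 ⟨v, hv.le⟩) (t : ℝ) :
    Integrable (fun ω => Real.exp (t * z ω)) μ := by
  have h := gauss_exp_integrable hv t
  rw [← hz] at h
  exact (integrable_map_measure (Measurable.aestronglyMeasurable (by fun_prop))
    hzm.aemeasurable).mp h

lemma z_exp_integral {Ω : Type} [MeasurableSpace Ω] (μ : Measure Ω) {v : ℝ} (hv : 0 < v)
    {z : Ω → ℝ} (hzm : Measurable z) (hz : μ.map z = gaussianReal 0 ⟨v, hv.le⟩) (t : ℝ) :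
    (∫ ω, Real.exp (t * z ω) ∂μ) = Real.exp (v * t ^ 2 / 2) := by
  have h := integral_map (μ := μ) (φ := z) (f := fun x => Real.exp (t * x)) hzm.aemeasurable
    (Measurable.aestronglyMeasurable (measurable_const.mul measurable_id).exp)
  rw [hz] at h
  rw [← h, gauss_exp_integral hv t]

lemma key_prod {Ω : Type} [MeasurableSpace Ω] (μ : Measure Ω) [IsProbabilityMeasure μ]
    {n : ℕ} {v : ℝ} (hv : 0 < v) (z : Fin n → Ω → ℝ) (hzm : ∀ i, Measurable (z i))
    (hz : ∀ i, μ.map (z i) = gaussianReal 0 ⟨v, hv.le⟩)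
    (hindep : iIndepFun z μ) (c : ℝ) (w : Fin n → ℝ) :
    (∫ ω, Real.exp (c * ∑ i, z i ω * w i) ∂μ)
      = ∏ i, Real.exp (v * (c * w i) ^ 2 / 2) := by
  set Y : Fin n → Ω → ℝ := fun i ω => z i ω * w i with hY
  have hYm : ∀ i, Measurable (Y i) := fun i => (hzm i).mul_const _
  have hYindep : iIndepFun Y μ :=
    hindep.comp (fun i x => x * w i) (fun i => measurable_mul_const _)
  have h1 : (∫ ω, Real.exp (c * ∑ i, z i ω * w i) ∂μ)
      = mgf (∑ i, Y i) μ c := by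
    unfold mgf
    congr 1
    funext ω
    simp [hY, Finset.sum_apply]
  rw [h1, iIndepFun.mgf_sum hYindep hYm Finset.univ]
  refine Finset.prod_congr rfl fun i _ => ?_
  have : mgf (Y i) μ c = ∫ ω, Real.exp ((c * w i) * z i ω) ∂μ := by
    unfold mgf
    congr 1
    funext ω
    simp only [hY]
    ring_nf
  rw [this, z_exp_integral μ hv (hzm i) (hz i)]

lemma key_int {Ω : Type} [MeasurableSpace Ω] (μ : Measure Ω) [IsProbabilityMeasure μ]
    {n : ℕ} {v : ℝ} (hv : 0 < v) (z : Fin n → Ω → ℝ) (hzm : ∀ i, Measurable (z i))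
    (hz : ∀ i, μ.map (z i) = gaussianReal 0 ⟨v, hv.le⟩)
    (hindep : iIndepFun z μ) (c : ℝ) (w : Fin n → ℝ) :
    Integrable (fun ω => Real.exp (c * ∑ i, z i ω * w i)) μ := by
  set Y : Fin n → Ω → ℝ := fun i ω => z i ω * w i with hY
  have hYm : ∀ i, Measurable (Y i) := fun i => (hzm i).mul_const _
  have hYindep : iIndepFun Y μ :=
    hindep.comp (fun i x => x * w i) (fun i => measurable_mul_const _)
  have h := iIndepFun.integrable_exp_mul_sum (t := c) hYindep hYm (s := Finset.univ)
    (fun i _ => by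
      have : (fun ω => Real.exp (c * Y i ω)) = fun ω => Real.exp ((c * w i) * z i ω) := by
        funext ω; simp only [hY]; ring_nf
      rw [this]
      exact z_exp_integrable μ hv (hzm i) (hz i) _)
  convert h using 2 with ω
  simp [hY, Finset.sum_apply]

theorem stmt_13
    {Ω : Type} [MeasurableSpace Ω] (μ : Measure Ω) [IsProbabilityMeasure μ]
    (n : ℕ) (hn : 1 ≤ n) (a σ : ℝ) (hσ : 0 < σ)
    (z : Fin n → Ω → ℝ) (hzm : ∀ i, Measurable (z i))
    (hz : ∀ i, μ.map (z i) = gaussianReal 0 ⟨σ ^ 2, sq_nonneg σ⟩)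
    (hindep : iIndepFun z μ) :
    (∫ ω, Real.exp (-(n * a ^ 2) / (2 * σ ^ 2)) * ((1 / 2 ^ n) *
        ∑ b ∈ Fintype.piFinset (fun _ : Fin n => ({-1, 1} : Finset ℝ)),
          Real.exp ((a / σ ^ 2) * ∑ i, z i ω * b i)) ∂μ) = 1
    ∧ (∫ ω, (Real.exp (-(n * a ^ 2) / (2 * σ ^ 2)) * ((1 / 2 ^ n) *
        ∑ b ∈ Fintype.piFinset (fun _ : Fin n => ({-1, 1} : Finset ℝ)),
          Real.exp ((a / σ ^ 2) * ∑ i, z i ω * b i))) ^ 2 ∂μ)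
      = Real.cosh (a ^ 2 / σ ^ 2) ^ n := by
  have hv : (0 : ℝ) < σ ^ 2 := by positivity
  have hσ2 : σ ^ 2 ≠ 0 := hv.ne'
  set K := Fintype.piFinset (fun _ : Fin n => ({-1, 1} : Finset ℝ)) with hK
  have hz' : ∀ i, μ.map (z i) = gaussianReal 0 ⟨σ ^ 2, hv.le⟩ := hz
  have hmem : ∀ b ∈ K, ∀ i, b i = -1 ∨ b i = 1 := by
    intro b hb i
    have := Fintype.mem_piFinset.mp hb i
    simpa using this
  have hsq : ∀ b ∈ K, ∀ i, (b i) ^ 2 = 1 := by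
    intro b hb i
    rcases hmem b hb i with h | h <;> rw [h] <;> norm_num
  have hcard : K.card = 2 ^ n := by
    rw [hK, Fintype.card_piFinset]
    simp [Finset.card_insert_of_notMem (by norm_num : (-1 : ℝ) ∉ ({1} : Finset ℝ))]
  have hvc : σ ^ 2 * (a / σ ^ 2) ^ 2 = a ^ 2 / σ ^ 2 := by
    field_simp
  have h2n : ((2 : ℝ)) ^ n ≠ 0 := by positivity
  constructor
  · -- first moment
    rw [integral_const_mul, integral_const_mul,
      integral_finset_sum _ (fun b _ => key_int μ hv z hzm hz' hindep (a / σ ^ 2) b)]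
    have hterm : ∀ b ∈ K, (∫ ω, Real.exp ((a / σ ^ 2) * ∑ i, z i ω * b i) ∂μ)
        = Real.exp (a ^ 2 / (2 * σ ^ 2)) ^ n := by
      intro b hb
      rw [key_prod μ hv z hzm hz' hindep (a / σ ^ 2) b]
      have hfac : ∀ i : Fin n, σ ^ 2 * ((a / σ ^ 2) * b i) ^ 2 / 2 = a ^ 2 / (2 * σ ^ 2) := by
        intro i
        rw [mul_pow, ← mul_assoc, hsq b hb i]
        rw [show σ ^ 2 * (a / σ ^ 2) ^ 2 * 1 = σ ^ 2 * (a / σ ^ 2) ^ 2 from mul_one _, hvc]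
        ring
      rw [Finset.prod_congr rfl (fun i _ => by rw [hfac i]), Finset.prod_const,
        Finset.card_univ, Fintype.card_fin]
    rw [Finset.sum_congr rfl hterm, Finset.sum_const, hcard, nsmul_eq_mul, Nat.cast_pow,
      Nat.cast_ofNat]
    have h1 : Real.exp (-(n * a ^ 2) / (2 * σ ^ 2)) * Real.exp (a ^ 2 / (2 * σ ^ 2)) ^ n
        = 1 := by
      rw [← Real.exp_nat_mul, ← Real.exp_add, ← Real.exp_zero]
      congr 1
      field_simp
      ring
    rw [show (1 : ℝ) / 2 ^ n * ((2 : ℝ) ^ n * Real.exp (a ^ 2 / (2 * σ ^ 2)) ^ n)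
        = Real.exp (a ^ 2 / (2 * σ ^ 2)) ^ n from by field_simp]
    exact h1
  · -- second moment
    have hpt : ∀ ω, (Real.exp (-(n * a ^ 2) / (2 * σ ^ 2)) * ((1 / 2 ^ n : ℝ) *
          ∑ b ∈ K, Real.exp ((a / σ ^ 2) * ∑ i, z i ω * b i))) ^ 2
        = Real.exp (-(n * a ^ 2) / (2 * σ ^ 2)) ^ 2 * ((1 / 2 ^ n : ℝ) ^ 2 *
          ∑ b ∈ K, ∑ d ∈ K, Real.exp ((a / σ ^ 2) * ∑ i, z i ω * (b i + d i))) := by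
      intro ω
      rw [mul_pow, mul_pow,
        pow_two (∑ b ∈ K, Real.exp ((a / σ ^ 2) * ∑ i, z i ω * b i)), Finset.sum_mul_sum]
      congr 1
      congr 1
      refine Finset.sum_congr rfl fun b _ => Finset.sum_congr rfl fun d _ => ?_
      rw [← Real.exp_add, ← mul_add, ← Finset.sum_add_distrib]
      congr 2
      exact Finset.sum_congr rfl fun i _ => (mul_add _ _ _).symm
    simp_rw [hpt]
    rw [integral_const_mul, integral_const_mul,
      integral_finset_sum _ (fun b _ => integrable_finset_sum _
        (fun d _ => key_int μ hv z hzm hz' hindep (a / σ ^ 2) _))]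
    have hterm : ∀ b ∈ K,
        (∫ ω, ∑ d ∈ K, Real.exp ((a / σ ^ 2) * ∑ i, z i ω * (b i + d i)) ∂μ)
        = Real.exp (a ^ 2 / σ ^ 2) ^ n * (2 ^ n * Real.cosh (a ^ 2 / σ ^ 2) ^ n) := by
      intro b hb
      rw [integral_finset_sum _ (fun d _ => key_int μ hv z hzm hz' hindep (a / σ ^ 2) _)]
      have hd : ∀ d ∈ K, (∫ ω, Real.exp ((a / σ ^ 2) * ∑ i, z i ω * (b i + d i)) ∂μ)
          = Real.exp (a ^ 2 / σ ^ 2) ^ n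
            * ∏ i, Real.exp ((a ^ 2 / σ ^ 2) * (b i * d i)) := by
        intro d hdK
        rw [key_prod μ hv z hzm hz' hindep (a / σ ^ 2) _]
        have hfac : ∀ i, σ ^ 2 * ((a / σ ^ 2) * (b i + d i)) ^ 2 / 2
            = a ^ 2 / σ ^ 2 + (a ^ 2 / σ ^ 2) * (b i * d i) := by
          intro i
          have h1 : ((a / σ ^ 2) * (b i + d i)) ^ 2
              = (a / σ ^ 2) ^ 2 * ((b i) ^ 2 + 2 * (b i * d i) + (d i) ^ 2) := by ring
          rw [h1, hsq b hb i, hsq d hdK i]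
          rw [show σ ^ 2 * ((a / σ ^ 2) ^ 2 * (1 + 2 * (b i * d i) + 1)) / 2
              = (σ ^ 2 * (a / σ ^ 2) ^ 2) + (σ ^ 2 * (a / σ ^ 2) ^ 2) * (b i * d i)
              from by ring, hvc]
        simp_rw [hfac, Real.exp_add]
        rw [Finset.prod_mul_distrib, Finset.prod_const, Finset.card_univ, Fintype.card_fin]
      rw [Finset.sum_congr rfl hd, ← Finset.mul_sum]
      congr 1
      rw [← Finset.prod_univ_sum (fun _ => ({-1, 1} : Finset ℝ))
        (fun (i : Fin n) (y : ℝ) => Real.exp ((a ^ 2 / σ ^ 2) * (b i * y)))]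
      have hfac2 : ∀ i : Fin n,
          (∑ y ∈ ({-1, 1} : Finset ℝ), Real.exp ((a ^ 2 / σ ^ 2) * (b i * y)))
          = 2 * Real.cosh (a ^ 2 / σ ^ 2) := by
        intro i
        rw [Finset.sum_pair (by norm_num : (-1 : ℝ) ≠ 1)]
        rcases hmem b hb i with h | h <;> rw [h, Real.cosh_eq] <;> ring_nf
      rw [Finset.prod_congr rfl (fun i _ => hfac2 i), Finset.prod_const, Finset.card_univ,
        Fintype.card_fin, mul_pow]
    rw [Finset.sum_congr rfl hterm, Finset.sum_const, hcard, nsmul_eq_mul, Nat.cast_pow,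
      Nat.cast_ofNat]
    have h1 : Real.exp (-(n * a ^ 2) / (2 * σ ^ 2)) ^ 2 * Real.exp (a ^ 2 / σ ^ 2) ^ n
        = 1 := by
      rw [← Real.exp_nat_mul, ← Real.exp_nat_mul, ← Real.exp_add, ← Real.exp_zero]
      congr 1
      push_cast
      field_simp
      ring
    rw [show ((1 : ℝ) / 2 ^ n) ^ 2 * ((2 : ℝ) ^ n * (Real.exp (a ^ 2 / σ ^ 2) ^ n *
        (2 ^ n * Real.cosh (a ^ 2 / σ ^ 2) ^ n)))
        = Real.exp (a ^ 2 / σ ^ 2) ^ n * Real.cosh (a ^ 2 / σ ^ 2) ^ n from by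
      field_simp]
    rw [← mul_assoc, h1, one_mul]
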